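/- For the metric on the space of conics with contravariant components g^{ys}=24q², g^{pr}=-24q², g^{ps}=-72qr, g^{qq}=24q², g^{qr}=24qr, g^{qs}=48qs-32r², g^{rr}=56r²-24qs, g^{rs}=(160/3)r³/q-16rs, g^{ss}=104s²-320r²s/q+(2560/9)r⁴/q² (other entries zero), the coordinates (y,p,q,r,s) are harmonic: the Laplace–Beltrami operator applied to each coordinate function vanishes, equivalently ∂_a(√|g|·g^{ab}) = 0 for each b. -/

import Mathlib

noncomputable section

open Matrix

/-- Partial derivative along the `i`-th coordinate of `ℝ⁵`. -/
def pd (i : Fin 5) (f : (Fin 5 → ℝ) → ℝ) (v : Fin 5 → ℝ) : ℝ :=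
  fderiv ℝ f v (Pi.single i 1)

/-- Contravariant metric on the space of conics, as a matrix field on `ℝ⁵` with
coordinates `(y,p,q,r,s) = (v 0, v 1, v 2, v 3, v 4)`. -/
def gUp (v : Fin 5 → ℝ) : Matrix (Fin 5) (Fin 5) ℝ :=
  let q := v 2; let r := v 3; let s := v 4
  !![0, 0, 0, 0, 24 * q ^ 2;
     0, 0, 0, -24 * q ^ 2, -72 * q * r;
     0, 0, 24 * q ^ 2, 24 * q * r, 48 * q * s - 32 * r ^ 2;
     0, -24 * q ^ 2, 24 * q * r, 56 * r ^ 2 - 24 * q * s,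
       (160 / 3) * r ^ 3 / q - 16 * r * s;
     24 * q ^ 2, -72 * q * r, 48 * q * s - 32 * r ^ 2,
       (160 / 3) * r ^ 3 / q - 16 * r * s,
       104 * s ^ 2 - 320 * r ^ 2 * s / q + (2560 / 9) * r ^ 4 / q ^ 2]

set_option maxHeartbeats 2000000 in
lemma det_gUp (v : Fin 5 → ℝ) (h : v 2 ≠ 0) : (gUp v).det = 7962624 * (v 2) ^ 10 := by
  simp only [gUp, det_succ_column_zero, Fin.sum_univ_succ, Fin.sum_univ_zero,
    Matrix.submatrix_apply, Matrix.cons_val', Matrix.cons_val_zero, Matrix.cons_val_one,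
    Matrix.head_cons, Matrix.head_fin_const, Fin.succ_zero_eq_one, Matrix.cons_val_fin_one,
    Matrix.empty_val', Matrix.cons_val_succ, Fin.succAbove_zero, Matrix.det_fin_zero,
    Fin.val_zero, Fin.val_succ, Matrix.det_unique]
  norm_num [show ((Fin.succ 2 : Fin 4)).succ.succAbove 2 = 2 by decide,
    show ((Fin.succ 2 : Fin 4)).succ.succAbove (Fin.succAbove 2 1) = 1 from by decide,
    show ((Fin.succ 2 : Fin 4)).succ.succAbove (Fin.succAbove 2 2) = 3 from by decide,
    show ((Fin.succ 2 : Fin 4)).succ.succAbove (Fin.succAbove 2 (Fin.succAbove 2 1)) = 1 from by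
      decide,
    show ((Fin.succ 2 : Fin 4)).castSucc = 3 from by decide,
    show ((Fin.succ 2 : Fin 4)).succ.succAbove (Fin.castSucc 2) = 2 from by decide,
    show ((Fin.succ 2 : Fin 4)).succ.succAbove ((Fin.succ 2).succAbove (Fin.succAbove 2 1)) = 1
      from by decide]
  simp +decide [Fin.succAbove, Fin.lt_def]
  field_simp
  ring

lemma pd_congr {f g : (Fin 5 → ℝ) → ℝ} {v : Fin 5 → ℝ} (h : f =ᶠ[nhds v] g) (i : Fin 5) :
    pd i f v = pd i g v := by
  unfold pd; rw [Filter.EventuallyEq.fderiv_eq h]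

lemma pd_zero (i : Fin 5) (v : Fin 5 → ℝ) : pd i (fun _ : Fin 5 → ℝ => (0:ℝ)) v = 0 := by
  simp [pd]

lemma pd_line {f : (Fin 5 → ℝ) → ℝ} {v : Fin 5 → ℝ} (hf : DifferentiableAt ℝ f v)
    (a : Fin 5) {d : ℝ}
    (hd : HasDerivAt (fun t : ℝ => f (v + t • (Pi.single a 1 : Fin 5 → ℝ))) d 0) :
    pd a f v = d := by
  have hl : HasDerivAt (fun t : ℝ => v + t • (Pi.single a 1 : Fin 5 → ℝ))
      (Pi.single a 1) 0 := by
    simpa using ((hasDerivAt_id (0:ℝ)).smul_const (Pi.single a 1 : Fin 5 → ℝ)).const_add v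
  have h0 : v + (0:ℝ) • (Pi.single a 1 : Fin 5 → ℝ) = v := by simp
  have hf' : HasFDerivAt f (fderiv ℝ f v) (v + (0:ℝ) • (Pi.single a 1 : Fin 5 → ℝ)) := by
    rw [h0]; exact hf.hasFDerivAt
  exact (hf'.comp_hasDerivAt 0 hl).unique hd

section EntryLemmas

variable (v : Fin 5 → ℝ)

lemma diff_coord (j : Fin 5) : DifferentiableAt ℝ (fun w : Fin 5 → ℝ => w j) v := by
  have h : HasFDerivAt (𝕜 := ℝ) (fun w : Fin 5 → ℝ => w j) (ContinuousLinearMap.proj j) v :=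
    hasFDerivAt_apply j v
  exact h.differentiableAt

lemma hb_aux (a j : Fin 5) :
    HasDerivAt (fun t : ℝ => v j + t * (Pi.single a 1 : Fin 5 → ℝ) j)
      ((Pi.single a 1 : Fin 5 → ℝ) j) 0 := by
  simpa using ((hasDerivAt_id (0:ℝ)).mul_const ((Pi.single a 1 : Fin 5 → ℝ) j)).const_add (v j)

lemma pdE1 (h : v 2 ≠ 0) (C : ℝ) (a : Fin 5) :
    pd a (fun w => C * ((w 2 ^ 5)⁻¹ * (24 * w 2 ^ 2))) v
      = C * (-72 / v 2 ^ 4) * (Pi.single a 1 : Fin 5 → ℝ) 2 := by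
  refine pd_line (by fun_prop (disch := simp [h])) a ?_
  simp only [Pi.add_apply, Pi.smul_apply, smul_eq_mul]
  have hb2 := hb_aux v a 2
  convert! (((hb2.fun_pow 5).fun_inv (by simpa using pow_ne_zero 5 h)).fun_mul
    ((hb2.fun_pow 2).const_mul 24)).const_mul C using 1
  simp only [zero_mul, add_zero]
  field_simp
  ring

lemma pdE2 (h : v 2 ≠ 0) (C : ℝ) (a : Fin 5) :
    pd a (fun w => C * ((w 2 ^ 5)⁻¹ * (-24 * w 2 ^ 2))) v
      = C * (72 / v 2 ^ 4) * (Pi.single a 1 : Fin 5 → ℝ) 2 := by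
  refine pd_line (by fun_prop (disch := simp [h])) a ?_
  simp only [Pi.add_apply, Pi.smul_apply, smul_eq_mul]
  have hb2 := hb_aux v a 2
  convert! (((hb2.fun_pow 5).fun_inv (by simpa using pow_ne_zero 5 h)).fun_mul
    ((hb2.fun_pow 2).const_mul (-24))).const_mul C using 1
  simp only [zero_mul, add_zero]
  field_simp
  ring

lemma pdE3 (h : v 2 ≠ 0) (C : ℝ) (a : Fin 5) :
    pd a (fun w => C * ((w 2 ^ 5)⁻¹ * (-72 * w 2 * w 3))) v
      = C * ((288 * v 3 / v 2 ^ 5) * (Pi.single a 1 : Fin 5 → ℝ) 2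
          - (72 / v 2 ^ 4) * (Pi.single a 1 : Fin 5 → ℝ) 3) := by
  refine pd_line (by fun_prop (disch := simp [h])) a ?_
  simp only [Pi.add_apply, Pi.smul_apply, smul_eq_mul]
  have hb2 := hb_aux v a 2
  have hb3 := hb_aux v a 3
  convert! (((hb2.fun_pow 5).fun_inv (by simpa using pow_ne_zero 5 h)).fun_mul
    ((hb2.const_mul (-72)).fun_mul hb3)).const_mul C using 1
  simp only [zero_mul, add_zero]
  field_simp
  ring

lemma pdE5 (h : v 2 ≠ 0) (C : ℝ) (a : Fin 5) :
    pd a (fun w => C * ((w 2 ^ 5)⁻¹ * (24 * w 2 * w 3))) v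
      = C * ((-96 * v 3 / v 2 ^ 5) * (Pi.single a 1 : Fin 5 → ℝ) 2
          + (24 / v 2 ^ 4) * (Pi.single a 1 : Fin 5 → ℝ) 3) := by
  refine pd_line (by fun_prop (disch := simp [h])) a ?_
  simp only [Pi.add_apply, Pi.smul_apply, smul_eq_mul]
  have hb2 := hb_aux v a 2
  have hb3 := hb_aux v a 3
  convert! (((hb2.fun_pow 5).fun_inv (by simpa using pow_ne_zero 5 h)).fun_mul
    ((hb2.const_mul 24).fun_mul hb3)).const_mul C using 1
  simp only [zero_mul, add_zero]
  field_simp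
  ring

lemma pdE6 (h : v 2 ≠ 0) (C : ℝ) (a : Fin 5) :
    pd a (fun w => C * ((w 2 ^ 5)⁻¹ * (48 * w 2 * w 4 - 32 * w 3 ^ 2))) v
      = C * ((-192 * v 4 / v 2 ^ 5 + 160 * v 3 ^ 2 / v 2 ^ 6) * (Pi.single a 1 : Fin 5 → ℝ) 2
          + (-64 * v 3 / v 2 ^ 5) * (Pi.single a 1 : Fin 5 → ℝ) 3
          + (48 / v 2 ^ 4) * (Pi.single a 1 : Fin 5 → ℝ) 4) := by
  refine pd_line (by fun_prop (disch := simp [h])) a ?_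
  simp only [Pi.add_apply, Pi.smul_apply, smul_eq_mul]
  have hb2 := hb_aux v a 2
  have hb3 := hb_aux v a 3
  have hb4 := hb_aux v a 4
  convert! (((hb2.fun_pow 5).fun_inv (by simpa using pow_ne_zero 5 h)).fun_mul
    (((hb2.const_mul 48).fun_mul hb4).fun_sub ((hb3.fun_pow 2).const_mul 32))).const_mul C using 1
  simp only [zero_mul, add_zero]
  field_simp
  ring

lemma pdE7 (h : v 2 ≠ 0) (C : ℝ) (a : Fin 5) :
    pd a (fun w => C * ((w 2 ^ 5)⁻¹ * (56 * w 3 ^ 2 - 24 * w 2 * w 4))) v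
      = C * ((96 * v 4 / v 2 ^ 5 - 280 * v 3 ^ 2 / v 2 ^ 6) * (Pi.single a 1 : Fin 5 → ℝ) 2
          + (112 * v 3 / v 2 ^ 5) * (Pi.single a 1 : Fin 5 → ℝ) 3
          + (-24 / v 2 ^ 4) * (Pi.single a 1 : Fin 5 → ℝ) 4) := by
  refine pd_line (by fun_prop (disch := simp [h])) a ?_
  simp only [Pi.add_apply, Pi.smul_apply, smul_eq_mul]
  have hb2 := hb_aux v a 2
  have hb3 := hb_aux v a 3
  have hb4 := hb_aux v a 4
  convert! (((hb2.fun_pow 5).fun_inv (by simpa using pow_ne_zero 5 h)).fun_mul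
    (((hb3.fun_pow 2).const_mul 56).fun_sub ((hb2.const_mul 24).fun_mul hb4))).const_mul C using 1
  simp only [zero_mul, add_zero]
  field_simp
  ring

lemma pdE8 (h : v 2 ≠ 0) (C : ℝ) (a : Fin 5) :
    pd a (fun w => C * ((w 2 ^ 5)⁻¹ * (160 / 3 * w 3 ^ 3 / w 2 - 16 * w 3 * w 4))) v
      = C * ((-320 * v 3 ^ 3 / v 2 ^ 7 + 80 * v 3 * v 4 / v 2 ^ 6) * (Pi.single a 1 : Fin 5 → ℝ) 2
          + (160 * v 3 ^ 2 / v 2 ^ 6 - 16 * v 4 / v 2 ^ 5) * (Pi.single a 1 : Fin 5 → ℝ) 3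
          + (-16 * v 3 / v 2 ^ 5) * (Pi.single a 1 : Fin 5 → ℝ) 4) := by
  have d2 := diff_coord v 2; have d3 := diff_coord v 3; have d4 := diff_coord v 4
  have dd : DifferentiableAt ℝ
      (fun w : Fin 5 → ℝ => C * ((w 2 ^ 5)⁻¹ * (160 / 3 * w 3 ^ 3 / w 2 - 16 * w 3 * w 4))) v := by
    simp only [div_eq_mul_inv]
    exact (((d2.pow 5).inv (pow_ne_zero 5 h)).mul
      ((((d3.pow 3).const_mul (160 / 3)).mul (d2.inv h)).sub
        ((d3.const_mul 16).mul d4))).const_mul C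
  refine pd_line dd a ?_
  simp only [Pi.add_apply, Pi.smul_apply, smul_eq_mul]
  have hb2 := hb_aux v a 2
  have hb3 := hb_aux v a 3
  have hb4 := hb_aux v a 4
  convert! (((hb2.fun_pow 5).fun_inv (by simpa using pow_ne_zero 5 h)).fun_mul
    ((((hb3.fun_pow 3).const_mul (160 / 3)).fun_div hb2 (by simpa using h)).fun_sub
      ((hb3.const_mul 16).fun_mul hb4))).const_mul C using 1
  simp only [zero_mul, add_zero]
  field_simp
  ring

lemma pdE9 (h : v 2 ≠ 0) (C : ℝ) (a : Fin 5) :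
    pd a (fun w => C * ((w 2 ^ 5)⁻¹ *
        (104 * w 4 ^ 2 - 320 * w 3 ^ 2 * w 4 / w 2 + 2560 / 9 * w 3 ^ 4 / w 2 ^ 2))) v
      = C * ((-520 * v 4 ^ 2 / v 2 ^ 6 + 1920 * v 3 ^ 2 * v 4 / v 2 ^ 7
              - 17920 / 9 * v 3 ^ 4 / v 2 ^ 8) * (Pi.single a 1 : Fin 5 → ℝ) 2
          + (-640 * v 3 * v 4 / v 2 ^ 6 + 10240 / 9 * v 3 ^ 3 / v 2 ^ 7)
              * (Pi.single a 1 : Fin 5 → ℝ) 3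
          + (208 * v 4 / v 2 ^ 5 - 320 * v 3 ^ 2 / v 2 ^ 6)
              * (Pi.single a 1 : Fin 5 → ℝ) 4) := by
  have d2 := diff_coord v 2; have d3 := diff_coord v 3; have d4 := diff_coord v 4
  have dd : DifferentiableAt ℝ
      (fun w : Fin 5 → ℝ => C * ((w 2 ^ 5)⁻¹ *
        (104 * w 4 ^ 2 - 320 * w 3 ^ 2 * w 4 / w 2 + 2560 / 9 * w 3 ^ 4 / w 2 ^ 2))) v := by
    simp only [div_eq_mul_inv]
    exact (((d2.pow 5).inv (pow_ne_zero 5 h)).mul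
      ((((d4.pow 2).const_mul 104).sub
          ((((d3.pow 2).const_mul 320).mul d4).mul (d2.inv h))).add
        (((d3.pow 4).const_mul (2560 / 9)).mul ((d2.pow 2).inv (pow_ne_zero 2 h))))).const_mul C
  refine pd_line dd a ?_
  simp only [Pi.add_apply, Pi.smul_apply, smul_eq_mul]
  have hb2 := hb_aux v a 2
  have hb3 := hb_aux v a 3
  have hb4 := hb_aux v a 4
  convert! (((hb2.fun_pow 5).fun_inv (by simpa using pow_ne_zero 5 h)).fun_mul
    ((((hb4.fun_pow 2).const_mul 104).fun_sub
        ((((hb3.fun_pow 2).const_mul 320).fun_mul hb4).fun_div hb2 (by simpa using h))).fun_add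
      (((hb3.fun_pow 4).const_mul (2560 / 9)).fun_div (hb2.fun_pow 2)
        (by simpa using pow_ne_zero 2 h)))).const_mul C using 1
  simp only [zero_mul, add_zero]
  field_simp
  ring

end EntryLemmas

/-- The coordinates `(y,p,q,r,s)` are harmonic for the conic metric:
`∂_a(√|g| · g^{ab}) = 0` for each `b`, where `|g|` is the determinant of the
covariant metric `(gUp)⁻¹`. -/
theorem conic_coordinates_are_harmonic :
    ∀ v : Fin 5 → ℝ, v 2 ≠ 0 → ∀ b : Fin 5,
      ∑ a : Fin 5,
        pd a (fun w => Real.sqrt |((gUp w)⁻¹).det| * gUp w a b) v = 0 := by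
  intro v hv b
  set σ : ℝ := if 0 < v 2 then 1 else -1 with hσ
  set C : ℝ := (Real.sqrt 7962624)⁻¹ * σ with hC
  have h0 : 0 < σ * v 2 := by
    by_cases hp : 0 < v 2
    · simpa [hσ, hp] using hp
    · have : v 2 < 0 := lt_of_le_of_ne (not_lt.1 hp) hv
      simp only [hσ, hp, if_false]
      nlinarith
  have hev : ∀ᶠ w in nhds v, 0 < σ * w 2 := by
    have hc : ContinuousAt (fun w : Fin 5 → ℝ => σ * w 2) v :=
      (continuous_const.mul (continuous_apply 2)).continuousAt
    exact hc.eventually (eventually_gt_nhds h0)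
  have hE : ∀ᶠ w in nhds v, Real.sqrt |((gUp w)⁻¹).det| = C * ((w 2) ^ 5)⁻¹ := by
    refine hev.mono fun w hw => ?_
    have hw2 : w 2 ≠ 0 := by
      intro h0'; rw [h0', mul_zero] at hw; exact lt_irrefl 0 hw
    have habs : |w 2 ^ 5| = σ * w 2 ^ 5 := by
      by_cases hp : 0 < v 2
      · have : 0 < w 2 := by have := hw; simp [hσ, hp] at this; linarith
        rw [abs_of_pos (by positivity), hσ]; simp [hp]
      · have hwneg : w 2 < 0 := by
          have := hw; simp only [hσ, hp, if_false, neg_mul, one_mul] at this; linarith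
        have h5 : w 2 ^ 5 < 0 := by nlinarith [pow_pos (neg_pos.2 hwneg) 5]
        rw [abs_of_neg h5, hσ]; simp [hp]
    rw [Matrix.det_nonsing_inv, Ring.inverse_eq_inv', det_gUp w hw2,
      abs_of_nonneg (by positivity), Real.sqrt_inv,
      Real.sqrt_mul (by norm_num : (0:ℝ) ≤ 7962624),
      show (w 2 : ℝ) ^ 10 = (w 2 ^ 5) ^ 2 by ring, Real.sqrt_sq_eq_abs, habs, hC]
    have hσinv : σ⁻¹ = σ := by by_cases hp : 0 < v 2 <;> simp [hσ, hp] <;> norm_num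
    rw [mul_inv, mul_inv, hσinv]; ring
  have hrw : ∀ a : Fin 5,
      pd a (fun w => Real.sqrt |((gUp w)⁻¹).det| * gUp w a b) v
        = pd a (fun w => C * (((w 2) ^ 5)⁻¹ * gUp w a b)) v := by
    intro a
    refine pd_congr (hE.mono fun w hw => ?_) a
    rw [hw]; ring
  rw [Finset.sum_congr rfl fun a _ => hrw a]
  clear h0 hev hE hrw
  fin_cases b <;>
    simp only [Fin.sum_univ_five, gUp, Fin.isValue, Matrix.cons_val', Matrix.cons_val_zero,
      Matrix.cons_val_one, Matrix.head_cons, Matrix.head_fin_const, Matrix.empty_val',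
      Matrix.cons_val_fin_one, Matrix.cons_val_succ, Matrix.cons_val_two, Matrix.cons_val_three,
      Matrix.cons_val_four, Matrix.tail_cons, Fin.reduceFinMk, Fin.zero_eta, Fin.mk_one,
      Matrix.of_apply, mul_zero]
  · rw [pd_zero, pd_zero, pd_zero, pd_zero, pdE1 v hv C 4]
    simp [Pi.single_apply]
  · rw [pd_zero, pd_zero, pd_zero, pdE2 v hv C 3, pdE3 v hv C 4]
    simp [Pi.single_apply]
  · rw [pd_zero, pd_zero, pdE1 v hv C 2, pdE5 v hv C 3, pdE6 v hv C 4]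
    simp [Pi.single_apply]
    field_simp
    ring
  · rw [pd_zero, pdE2 v hv C 1, pdE5 v hv C 2, pdE7 v hv C 3, pdE8 v hv C 4]
    simp [Pi.single_apply]
    field_simp
    ring
  · rw [pdE1 v hv C 0, pdE3 v hv C 1, pdE6 v hv C 2, pdE8 v hv C 3, pdE9 v hv C 4]
    simp [Pi.single_apply]
    field_simp
    ring
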